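/- A Markov transition kernel P on a measurable space X satisfying the minorization condition P(x,A) ≥ ε ν(A) for all x ∈ X and measurable A (with ε ∈ (0,1] and ν a probability measure) is uniformly geometrically ergodic: it has a unique invariant probability measure π, and ‖P^n − π‖ ≤ 2(1−ε)^n for all n, where ‖·‖ is the uniform operator norm over functions bounded by 1. -/

import Mathlib

open MeasureTheory ProbabilityTheory Filter Topology

noncomputable def iterKer {X : Type*} [MeasurableSpace X] (P : Kernel X X) : ℕ → Kernel X X
  | 0 => Kernel.id
  | n + 1 => (iterKer P n) ∘ₖ P

section Aux
variable {X : Type*} [MeasurableSpace X]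

noncomputable def qit (Q : Kernel X X) (μ : Measure X) : ℕ → Measure X
  | 0 => μ
  | n + 1 => (qit Q μ n).bind Q

instance iterKer_markov (P : Kernel X X) [IsMarkovKernel P] (n : ℕ) :
    IsMarkovKernel (iterKer P n) := by
  induction n with
  | zero => exact (inferInstance : IsMarkovKernel (Kernel.id))
  | succ n ih => exact (inferInstance : IsMarkovKernel ((iterKer P n) ∘ₖ P))

lemma iterKer_succ' (P : Kernel X X) [IsMarkovKernel P] (n : ℕ) :
    iterKer P (n + 1) = P ∘ₖ iterKer P n := by
  induction n with
  | zero => show Kernel.id ∘ₖ P = P ∘ₖ Kernel.id; rw [Kernel.id_comp, Kernel.comp_id]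
  | succ n ih =>
      show (iterKer P (n+1)) ∘ₖ P = P ∘ₖ iterKer P (n+1)
      conv_lhs => rw [ih]
      rw [Kernel.comp_assoc]
      rfl

lemma qit_univ (Q : Kernel X X) [IsMarkovKernel Q] (μ : Measure X) [IsProbabilityMeasure μ]
    (n : ℕ) : qit Q μ n Set.univ = 1 := by
  induction n with
  | zero => show μ Set.univ = 1; exact measure_univ
  | succ n ih =>
      show ((qit Q μ n).bind ⇑Q) Set.univ = 1
      rw [Measure.bind_apply MeasurableSet.univ Q.measurable.aemeasurable]
      simp [measure_univ, ih]

lemma qit_succ_apply (Q : Kernel X X) (μ : Measure X) (n : ℕ) {A : Set X}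
    (hA : MeasurableSet A) :
    qit Q μ (n + 1) A = ∫⁻ x, Q x A ∂(qit Q μ n) := by
  show ((qit Q μ n).bind ⇑Q) A = _
  rw [Measure.bind_apply hA Q.measurable.aemeasurable]

end Aux

open MeasureTheory ProbabilityTheory Filter Topology
open scoped ENNReal

section Aux2
variable {X : Type*} [MeasurableSpace X]

lemma exists_Q (P : Kernel X X) [IsMarkovKernel P] (ν : Measure X) [IsProbabilityMeasure ν]
    (ε : ℝ) (hε : 0 < ε) (hε1 : ε ≤ 1)
    (hmin : ∀ (x : X) (A : Set X), MeasurableSet A → ENNReal.ofReal ε * ν A ≤ P x A) :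
    ∃ Q : Kernel X X, IsMarkovKernel Q ∧
      ∀ x, P x = ENNReal.ofReal ε • ν + ENNReal.ofReal (1 - ε) • Q x := by
  set e : ℝ≥0∞ := ENNReal.ofReal ε with he
  set e' : ℝ≥0∞ := ENNReal.ofReal (1 - ε) with he'
  have hee' : e + e' = 1 := by
    rw [he, he', ← ENNReal.ofReal_add hε.le (by linarith), add_sub_cancel, ENNReal.ofReal_one]
  have hetop : e ≠ ⊤ := ENNReal.ofReal_ne_top
  have he'top : e' ≠ ⊤ := ENNReal.ofReal_ne_top
  have hle : ∀ x, e • ν ≤ P x := fun x => Measure.le_iff.2 fun A hA => by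
    simpa [Measure.smul_apply, smul_eq_mul] using hmin x A hA
  haveI : IsFiniteMeasure (e • ν) :=
    ⟨by simp [Measure.smul_apply, measure_univ]; exact ENNReal.ofReal_lt_top⟩
  rcases lt_or_ge ε 1 with h1 | h1
  · -- ε < 1
    have he'0 : e' ≠ 0 := by
      simp [he', ENNReal.ofReal_eq_zero]; linarith
    refine ⟨⟨fun x => e'⁻¹ • (P x - e • ν), ?_⟩, ?_, ?_⟩
    · refine Measure.measurable_of_measurable_coe _ fun s hs => ?_
      have : ∀ x, (e'⁻¹ • (P x - e • ν)) s = e'⁻¹ * (P x s - e * ν s) := fun x => by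
        rw [Measure.smul_apply, Measure.sub_apply hs (hle x), smul_eq_mul,
          Measure.smul_apply, smul_eq_mul]
      simp_rw [this]
      exact ((P.measurable_coe hs).sub measurable_const).const_mul _
    · constructor
      intro x
      constructor
      show (e'⁻¹ • (P x - e • ν)) Set.univ = 1
      rw [Measure.smul_apply, Measure.sub_apply MeasurableSet.univ (hle x), smul_eq_mul]
      have : P x Set.univ - (e • ν) Set.univ = e' := by
        simp [Measure.smul_apply, measure_univ, smul_eq_mul]
        rw [← hee', ENNReal.add_sub_cancel_left hetop]
      rw [this, ENNReal.inv_mul_cancel he'0 he'top]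
    · intro x
      show P x = e • ν + e' • e'⁻¹ • (P x - e • ν)
      rw [smul_smul, ENNReal.mul_inv_cancel he'0 he'top, one_smul, add_comm,
        Measure.sub_add_cancel_of_le (hle x)]
  · -- ε = 1
    have hε1' : ε = 1 := le_antisymm hε1 h1
    have hPx : ∀ x, P x = ν := by
      intro x
      ext A hA
      have hmin' : ∀ (B : Set X), MeasurableSet B → ν B ≤ P x B := fun B hB => by
        simpa [he, hε1'] using hmin x B hB
      refine le_antisymm ?_ (hmin' A hA)
      have hPA : P x A = P x Set.univ - P x Aᶜ := by
        have := measure_compl hA.compl (measure_ne_top (P x) Aᶜ)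
        rwa [compl_compl] at this
      have hνA : ν A = ν Set.univ - ν Aᶜ := by
        have := measure_compl hA.compl (measure_ne_top ν Aᶜ)
        rwa [compl_compl] at this
      rw [hPA, hνA, measure_univ, measure_univ]
      exact tsub_le_tsub_left (hmin' Aᶜ hA.compl) 1
    refine ⟨Kernel.const X ν, inferInstance, fun x => ?_⟩
    have : e = 1 := by simp [he, hε1']
    have h0 : e' = 0 := by simp [he', hε1']
    simp [hPx x, this, h0]

end Aux2
section Aux3
set_option linter.unusedSectionVars false
variable {X : Type*} [MeasurableSpace X]
variable (P Q : Kernel X X) [IsMarkovKernel P] [IsMarkovKernel Q]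
variable (ν : Measure X) [IsProbabilityMeasure ν] (ε : ℝ)

lemma bindP (hPx : ∀ x, P x = ENNReal.ofReal ε • ν + ENNReal.ofReal (1 - ε) • Q x)
    (μ : Measure X) {A : Set X} (hA : MeasurableSet A) :
    (μ.bind ⇑P) A = ENNReal.ofReal ε * ν A * μ Set.univ
      + ENNReal.ofReal (1 - ε) * (μ.bind ⇑Q) A := by
  rw [Measure.bind_apply hA P.measurable.aemeasurable, Measure.bind_apply hA Q.measurable.aemeasurable]
  have h1 : ∀ x, P x A = ENNReal.ofReal ε * ν A + ENNReal.ofReal (1 - ε) * Q x A := fun x => by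
    rw [hPx x]; simp [Measure.smul_apply, smul_eq_mul]
  simp_rw [h1]
  rw [lintegral_add_left measurable_const, lintegral_const,
    lintegral_const_mul _ (Q.measurable_coe hA)]

lemma decomp (hPx : ∀ x, P x = ENNReal.ofReal ε • ν + ENNReal.ofReal (1 - ε) • Q x)
    (n : ℕ) (x : X) :
    iterKer P n x = (∑ k ∈ Finset.range n,
        (ENNReal.ofReal ε * ENNReal.ofReal (1 - ε) ^ k) • qit Q ν k)
      + ENNReal.ofReal (1 - ε) ^ n • qit Q (Measure.dirac x) n := by
  set e : ℝ≥0∞ := ENNReal.ofReal ε with he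
  set e' : ℝ≥0∞ := ENNReal.ofReal (1 - ε) with he'
  induction n with
  | zero =>
      show Kernel.id x = _
      simp [Kernel.id_apply, qit]
  | succ n ih =>
      have hs : iterKer P (n + 1) x = (iterKer P n x).bind ⇑P := by
        rw [iterKer_succ', Kernel.comp_apply]
      have hu : ((∑ k ∈ Finset.range n, (e * e' ^ k) • qit Q ν k)
          + e' ^ n • qit Q (Measure.dirac x) n) Set.univ = 1 := by
        rw [← ih]; exact measure_univ
      ext A hA
      rw [hs, ih, bindP P Q ν ε hPx _ hA, hu, mul_one]
      have hbq : ((∑ k ∈ Finset.range n, (e * e' ^ k) • qit Q ν k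
            + e' ^ n • qit Q (Measure.dirac x) n).bind ⇑Q) A
          = ∑ k ∈ Finset.range n, (e * e' ^ k) * qit Q ν (k + 1) A
            + e' ^ n * qit Q (Measure.dirac x) (n + 1) A := by
        rw [Measure.bind_apply hA Q.measurable.aemeasurable, lintegral_add_measure,
          lintegral_finset_sum_measure, lintegral_smul_measure]
        congr 1
        · refine Finset.sum_congr rfl fun k _ => ?_
          rw [lintegral_smul_measure, qit_succ_apply Q ν k hA, smul_eq_mul]
        · rw [qit_succ_apply Q (Measure.dirac x) n hA, smul_eq_mul]
      rw [hbq]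
      rw [Measure.add_apply, Measure.finset_sum_apply, Measure.smul_apply, smul_eq_mul,
        Finset.sum_range_succ']
      simp_rw [Measure.smul_apply, smul_eq_mul]
      rw [mul_add, Finset.mul_sum]
      have h0 : qit Q ν 0 = ν := rfl
      rw [h0, pow_zero, mul_one, pow_succ]
      have hsum : ∑ k ∈ Finset.range n, e' * (e * e' ^ k * qit Q ν (k + 1) A)
          = ∑ k ∈ Finset.range n, e * e' ^ (k + 1) * qit Q ν (k + 1) A :=
        Finset.sum_congr rfl fun k _ => by rw [pow_succ]; ring
      rw [hsum]
      ring
end Aux3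

section Aux4
variable {X : Type*} [MeasurableSpace X]

lemma bind_iterKer_eq (P : Kernel X X) [IsMarkovKernel P] (π' : Measure X)
    (hinv : π'.bind (fun x => P x) = π') (n : ℕ) :
    π'.bind ⇑(iterKer P n) = π' := by
  have hinv' : π'.bind ⇑P = π' := hinv
  induction n with
  | zero =>
      ext A hA
      rw [Measure.bind_apply hA (iterKer P 0).measurable.aemeasurable]
      show ∫⁻ a, Kernel.id a A ∂π' = π' A
      simp_rw [Kernel.id_apply, Measure.dirac_apply' _ hA]
      rw [lintegral_indicator_one hA]
  | succ n ih =>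
      ext A hA
      rw [Measure.bind_apply hA (iterKer P (n + 1)).measurable.aemeasurable]
      have hstep : ∀ x, iterKer P (n + 1) x A = ∫⁻ y, iterKer P n y A ∂(P x) := fun x => by
        have h1 : iterKer P (n + 1) x = (P x).bind ⇑(iterKer P n) := by
          show ((iterKer P n) ∘ₖ P) x = _
          rw [Kernel.comp_apply]
        rw [h1, Measure.bind_apply hA (iterKer P n).measurable.aemeasurable]
      simp_rw [hstep]
      rw [← Measure.lintegral_bind P.measurable.aemeasurable (Kernel.measurable_coe (iterKer P n) hA).aemeasurable, hinv',
        ← Measure.bind_apply hA (iterKer P n).measurable.aemeasurable, ih]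

end Aux4

/-- A Markov kernel satisfying the minorization condition `P(x,A) ≥ ε ν(A)` is uniformly
geometrically ergodic: it has a unique invariant probability measure `π` and
`‖Pⁿ - π‖ ≤ 2(1-ε)ⁿ`. -/
theorem stmt8 {X : Type*} [MeasurableSpace X] (P : Kernel X X) [IsMarkovKernel P]
    (ν : Measure X) [IsProbabilityMeasure ν]
    (ε : ℝ) (hε : 0 < ε) (hε1 : ε ≤ 1)
    (hmin : ∀ (x : X) (A : Set X), MeasurableSet A → ENNReal.ofReal ε * ν A ≤ P x A) :
    ∃ π : Measure X, IsProbabilityMeasure π ∧ π.bind (fun x => P x) = π ∧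
      (∀ (n : ℕ) (f : X → ℝ), Measurable f → (∀ x, |f x| ≤ 1) →
        ∀ x, |(∫ y, f y ∂(iterKer P n x)) - ∫ y, f y ∂π| ≤ 2 * (1 - ε) ^ n) ∧
      (∀ π' : Measure X, IsProbabilityMeasure π' → π'.bind (fun x => P x) = π' → π' = π) := by
  obtain ⟨Q, hQM, hPx⟩ := exists_Q P ν ε hε hε1 hmin
  haveI := hQM
  set e : ℝ≥0∞ := ENNReal.ofReal ε with he
  set e' : ℝ≥0∞ := ENNReal.ofReal (1 - ε) with he'
  have hee' : e + e' = 1 := by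
    rw [he, he', ← ENNReal.ofReal_add hε.le (by linarith), add_sub_cancel, ENNReal.ofReal_one]
  have hetop : e ≠ ⊤ := ENNReal.ofReal_ne_top
  have he'top : e' ≠ ⊤ := ENNReal.ofReal_ne_top
  have he0 : e ≠ 0 := by simp [he, ENNReal.ofReal_eq_zero]; linarith
  have h1e' : 1 - e' = e := by rw [← hee', ENNReal.add_sub_cancel_right he'top]
  set c : ℕ → ℝ≥0∞ := fun k => e * e' ^ k with hc
  have hck_top : ∀ k, c k ≠ ⊤ := fun k => ENNReal.mul_ne_top hetop (ENNReal.pow_ne_top he'top)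
  have htsum : ∑' k, c k = 1 := by
    rw [hc]
    simp only []
    rw [ENNReal.tsum_mul_left, ENNReal.tsum_geometric, h1e', ENNReal.mul_inv_cancel he0 hetop]
  set π : Measure X := Measure.sum (fun k => c k • qit Q ν k) with hπdef
  have hπ_apply : ∀ {A : Set X}, MeasurableSet A → π A = ∑' k, c k * qit Q ν k A := by
    intro A hA
    rw [hπdef, Measure.sum_apply _ hA]
    simp_rw [Measure.smul_apply, smul_eq_mul]
  have hπuniv : π Set.univ = 1 := by
    rw [hπ_apply MeasurableSet.univ]
    simp_rw [qit_univ, mul_one]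
    exact htsum
  haveI hπprob : IsProbabilityMeasure π := ⟨hπuniv⟩
  have hπinv : π.bind (fun x => P x) = π := by
    ext A hA
    have hb : (π.bind (fun x => P x)) A = (π.bind ⇑P) A := rfl
    rw [hb, bindP P Q ν ε hPx π hA, hπuniv, mul_one]
    have hbq : (π.bind ⇑Q) A = ∑' k, c k * qit Q ν (k + 1) A := by
      rw [Measure.bind_apply hA Q.measurable.aemeasurable, hπdef, lintegral_sum_measure]
      exact tsum_congr fun k => by
        rw [lintegral_smul_measure, ← qit_succ_apply Q ν k hA, smul_eq_mul]
    rw [hbq, hπ_apply hA]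
    conv_rhs => rw [tsum_eq_zero_add' ENNReal.summable]
    have h0 : qit Q ν 0 = ν := rfl
    have hr : e' * (∑' k, c k * qit Q ν (k + 1) A) = ∑' k, c (k + 1) * qit Q ν (k + 1) A := by
      rw [← ENNReal.tsum_mul_left]
      exact tsum_congr fun k => by rw [hc]; simp only []; rw [pow_succ]; ring
    have hc0 : c 0 = e := by simp [hc]
    rw [hr, h0, hc0]
  have hbound : ∀ (n : ℕ) (f : X → ℝ), Measurable f → (∀ x, |f x| ≤ 1) →
      ∀ x, |(∫ y, f y ∂(iterKer P n x)) - ∫ y, f y ∂π| ≤ 2 * (1 - ε) ^ n := by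
    intro n f hf hf1 x
    set S : Measure X := ∑ k ∈ Finset.range n, c k • qit Q ν k with hS
    set T : Measure X := e' ^ n • qit Q (Measure.dirac x) n with hT
    set R : Measure X := Measure.sum (fun k => c (n + k) • qit Q ν (n + k)) with hR
    have hdec : iterKer P n x = S + T := decomp P Q ν ε hPx n x
    have hπSR : π = S + R := by
      ext A hA
      rw [hπ_apply hA, Measure.add_apply, hS, hR, Measure.finset_sum_apply,
        Measure.sum_apply _ hA]
      simp_rw [Measure.smul_apply, smul_eq_mul]
      rw [← Summable.sum_add_tsum_nat_add' (f := fun k => c k * qit Q ν k A) (k := n) ENNReal.summable]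
      congr 1
      exact tsum_congr fun k => by rw [add_comm k n]
    have hTuniv : T Set.univ = e' ^ n := by
      rw [hT, Measure.smul_apply, qit_univ, smul_eq_mul, mul_one]
    have hRuniv : R Set.univ = e' ^ n := by
      rw [hR, Measure.sum_apply _ MeasurableSet.univ]
      simp_rw [Measure.smul_apply, qit_univ, smul_eq_mul, mul_one, hc]
      calc ∑' k, e * e' ^ (n + k) = ∑' k, e' ^ n * (e * e' ^ k) := by
            exact tsum_congr fun k => by rw [pow_add]; ring
        _ = e' ^ n * ∑' k, c k := by rw [ENNReal.tsum_mul_left]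
        _ = e' ^ n := by rw [htsum, mul_one]
    haveI hSfin : IsFiniteMeasure S := by
      constructor
      rw [hS, Measure.finset_sum_apply]
      refine ENNReal.sum_lt_top.2 fun k _ => ?_
      rw [Measure.smul_apply, qit_univ, smul_eq_mul, mul_one]
      exact (hck_top k).lt_top
    haveI hTfin : IsFiniteMeasure T := by
      constructor
      rw [hTuniv]
      exact (ENNReal.pow_ne_top he'top).lt_top
    haveI hRfin : IsFiniteMeasure R := by
      constructor
      rw [hRuniv]
      exact (ENNReal.pow_ne_top he'top).lt_top
    have hint : ∀ (μ : Measure X) [IsFiniteMeasure μ], Integrable f μ := by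
      intro μ _
      refine Integrable.mono' (integrable_const 1) hf.aestronglyMeasurable ?_
      exact ae_of_all _ fun y => by simpa [Real.norm_eq_abs] using hf1 y
    have hsplit1 : ∫ y, f y ∂(iterKer P n x) = (∫ y, f y ∂S) + ∫ y, f y ∂T := by
      rw [hdec, integral_add_measure (hint S) (hint T)]
    have hsplit2 : ∫ y, f y ∂π = (∫ y, f y ∂S) + ∫ y, f y ∂ R := by
      rw [hπSR, integral_add_measure (hint S) (hint R)]
    have he'pow : (e' ^ n).toReal = (1 - ε) ^ n := by
      rw [ENNReal.toReal_pow, he', ENNReal.toReal_ofReal (by linarith)]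
    have hTb : |∫ y, f y ∂T| ≤ (1 - ε) ^ n := by
      have := norm_integral_le_of_norm_le_const (μ := T) (C := 1)
        (ae_of_all _ fun y => by simpa [Real.norm_eq_abs] using hf1 y) (f := f)
      rw [Real.norm_eq_abs, measureReal_def, hTuniv, he'pow, one_mul] at this
      exact this
    have hRb : |∫ y, f y ∂ R| ≤ (1 - ε) ^ n := by
      have := norm_integral_le_of_norm_le_const (μ := R) (C := 1)
        (ae_of_all _ fun y => by simpa [Real.norm_eq_abs] using hf1 y) (f := f)
      rw [Real.norm_eq_abs, measureReal_def, hRuniv, he'pow, one_mul] at this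
      exact this
    calc |(∫ y, f y ∂(iterKer P n x)) - ∫ y, f y ∂π|
        = |(∫ y, f y ∂T) - ∫ y, f y ∂ R| := by rw [hsplit1, hsplit2]; ring_nf
      _ ≤ |∫ y, f y ∂T| + |∫ y, f y ∂ R| := abs_sub _ _
      _ ≤ (1 - ε) ^ n + (1 - ε) ^ n := add_le_add hTb hRb
      _ = 2 * (1 - ε) ^ n := by ring
  refine ⟨π, hπprob, hπinv, hbound, ?_⟩
  intro π' hπ'prob hπ'inv
  have hε'lt1 : 1 - ε < 1 := by linarith
  have hε'nonneg : (0:ℝ) ≤ 1 - ε := by linarith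
  ext A hA
  have hkey : (π' A).toReal = (π A).toReal := by
    have hgmeas : ∀ n : ℕ, Measurable fun y => ((iterKer P n y) A).toReal := fun n =>
      (Kernel.measurable_coe _ hA).ennreal_toReal
    have h1 : ∀ n : ℕ, (π' A).toReal = ∫ y, ((iterKer P n y) A).toReal ∂π' := by
      intro n
      conv_lhs => rw [← bind_iterKer_eq P π' hπ'inv n]
      rw [Measure.bind_apply hA (iterKer P n).measurable.aemeasurable,
        ← integral_toReal ((Kernel.measurable_coe _ hA).aemeasurable)
          (ae_of_all _ fun y => measure_lt_top _ _)]
    have h2 : ∀ (n : ℕ) (y : X),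
        |((iterKer P n y) A).toReal - (π A).toReal| ≤ 2 * (1 - ε) ^ n := by
      intro n y
      have hind := hbound n (A.indicator 1) (measurable_one.indicator hA)
        (fun z => by
          by_cases hz : z ∈ A <;> simp [Set.indicator_of_mem, Set.indicator_of_notMem, hz])
        y
      rwa [integral_indicator_one hA, integral_indicator_one hA] at hind
    have h3 : ∀ n : ℕ, |(π' A).toReal - (π A).toReal| ≤ 2 * (1 - ε) ^ n := by
      intro n
      have hgi : Integrable (fun y => ((iterKer P n y) A).toReal) π' := by
        refine Integrable.mono' (integrable_const 1) (hgmeas n).aestronglyMeasurable ?_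
        refine ae_of_all _ fun y => ?_
        rw [Real.norm_eq_abs, abs_of_nonneg ENNReal.toReal_nonneg]
        exact ENNReal.toReal_le_of_le_ofReal zero_le_one (by simpa using prob_le_one)
      have hconst : (π A).toReal = ∫ _, (π A).toReal ∂π' := by
        rw [integral_const, measureReal_def, measure_univ, ENNReal.toReal_one, one_smul]
      rw [h1 n, hconst, ← integral_sub hgi (integrable_const _)]
      have := norm_integral_le_of_norm_le_const (μ := π')
        (f := fun y => ((iterKer P n y) A).toReal - (π A).toReal) (C := 2 * (1 - ε) ^ n)
        (ae_of_all _ fun y => by rw [Real.norm_eq_abs]; exact h2 n y)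
      rwa [Real.norm_eq_abs, measureReal_def, measure_univ, ENNReal.toReal_one, mul_one] at this
    have h4 : Tendsto (fun n : ℕ => 2 * (1 - ε) ^ n) atTop (nhds 0) := by
      have := (tendsto_pow_atTop_nhds_zero_of_lt_one hε'nonneg hε'lt1).const_mul (2:ℝ)
      simpa using this
    have h5 : |(π' A).toReal - (π A).toReal| ≤ 0 := ge_of_tendsto' h4 h3
    have h6 : |(π' A).toReal - (π A).toReal| = 0 := le_antisymm h5 (abs_nonneg _)
    linarith [abs_eq_zero.1 h6]
  exact (ENNReal.toReal_eq_toReal_iff' (measure_ne_top _ _) (measure_ne_top _ _)).1 hkey
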